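/- Let G be a connected graph with minimum degree δ(G) ≥ 4 and at least 5 vertices. Then b_tr(G) ≤ 2·ad(G) + Δ(G) − 4, where ad(G) = 2|E(G)|/|V(G)| is the average degree. -/

import Mathlib

open SimpleGraph Finset

variable {V : Type*} [Fintype V] [DecidableEq V]

/-- The number of orbits (cycles together with fixed points) of a permutation of a finite type. -/
noncomputable def permNumOrbits {α : Type*} [Fintype α] [DecidableEq α] (ψ : Equiv.Perm α) : ℕ :=
  Multiset.card ψ.cycleType + (Finset.univ.filter fun a => ψ a = a).card

/-- A combinatorial (2-cell) embedding scheme of a graph on a surface: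
a rotation system together with an edge signature (Mohar–Thomassen). -/
structure SimpleGraph.EmbeddingScheme (G : SimpleGraph V) [DecidableRel G.Adj] where
  rot : Equiv.Perm G.Dart
  rot_fst : ∀ d : G.Dart, (rot d).toProd.1 = d.toProd.1
  rot_cyclic : ∀ d e : G.Dart, d.toProd.1 = e.toProd.1 → ∃ k : ℕ, (rot ^ k) d = e
  sign : G.Dart → ℤˣ
  sign_symm : ∀ d : G.Dart, sign d.symm = sign d

namespace SimpleGraph.EmbeddingScheme

variable {G : SimpleGraph V} [DecidableRel G.Adj] (S : G.EmbeddingScheme)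

def swapPerm : Equiv.Perm (G.Dart × ℤˣ) :=
  Function.Involutive.toPerm (fun p => (p.1.symm, p.2 * S.sign p.1)) (by
    intro p
    simp [SimpleGraph.Dart.symm_symm, S.sign_symm p.1, mul_assoc, Int.units_mul_self])

def rotPerm : Equiv.Perm (G.Dart × ℤˣ) where
  toFun p := ((S.rot ^ (p.2 : ℤ)) p.1, p.2)
  invFun p := ((S.rot ^ (-(p.2 : ℤ))) p.1, p.2)
  left_inv p := by
    simp [← Equiv.Perm.mul_apply, ← zpow_add]
  right_inv p := by
    show ((S.rot ^ (p.2 : ℤ)) ((S.rot ^ (-(p.2 : ℤ))) p.1), p.2) = p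
    rw [← Equiv.Perm.mul_apply, ← zpow_add, add_neg_cancel, zpow_zero]; rfl

/-- The face-tracing permutation on signed darts. -/
def faceMap : Equiv.Perm (G.Dart × ℤˣ) := S.swapPerm.trans S.rotPerm

/-- Each face is traced by exactly two orbits of the face-tracing permutation. -/
noncomputable def numFaces : ℕ := permNumOrbits S.faceMap / 2

/-- The Euler characteristic of the closed surface determined by the scheme. -/
noncomputable def eulerChar : ℤ :=
  (Fintype.card V : ℤ) - (G.edgeFinset.card : ℤ) + (S.numFaces : ℤ)

/-- The scheme describes an embedding on an orientable surface iff its signature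
is switching-equivalent to the all-positive signature. -/
def IsOrientable : Prop := ∃ θ : V → ℤˣ, ∀ d : G.Dart, S.sign d = θ d.toProd.1 * θ d.toProd.2

end SimpleGraph.EmbeddingScheme

/-- `G` has orientable genus `g`. -/
def SimpleGraph.HasOrientableGenus (G : SimpleGraph V) [DecidableRel G.Adj] (g : ℕ) : Prop :=
  (∃ S : G.EmbeddingScheme, S.IsOrientable ∧ S.eulerChar = 2 - 2 * (g : ℤ)) ∧
  ∀ g' : ℕ, g' < g → ¬ ∃ S : G.EmbeddingScheme, S.IsOrientable ∧ S.eulerChar = 2 - 2 * (g' : ℤ)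

/-- `G` has nonorientable genus `k`. -/
def SimpleGraph.HasNonorientableGenus (G : SimpleGraph V) [DecidableRel G.Adj] (k : ℕ) : Prop :=
  (∃ S : G.EmbeddingScheme, ¬ S.IsOrientable ∧ S.eulerChar = 2 - (k : ℤ)) ∧
  ∀ k' : ℕ, k' < k → ¬ ∃ S : G.EmbeddingScheme, ¬ S.IsOrientable ∧ S.eulerChar = 2 - (k' : ℤ)

/-- `G` is planar: every component embeds in the sphere. -/
def SimpleGraph.IsPlanar (G : SimpleGraph V) [DecidableRel G.Adj] : Prop :=
  ∃ S : G.EmbeddingScheme, S.IsOrientable ∧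
    S.eulerChar = 2 * (Nat.card G.ConnectedComponent : ℤ)

/-- `S` is a total dominating set: every vertex has a neighbour in `S`. -/
def SimpleGraph.IsTotalDominatingSet (G : SimpleGraph V) (S : Finset V) : Prop :=
  ∀ v : V, ∃ u ∈ S, G.Adj u v

noncomputable def SimpleGraph.totalDominationNumber (G : SimpleGraph V) : ℕ :=
  sInf {k : ℕ | ∃ S : Finset V, G.IsTotalDominatingSet S ∧ S.card = k}

/-- The spanning subgraph of `G` keeping only edges meeting `S`. -/
def SimpleGraph.weakSubgraph (G : SimpleGraph V) (S : Finset V) : SimpleGraph V where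
  Adj u v := G.Adj u v ∧ (u ∈ S ∨ v ∈ S)
  symm := ⟨fun u v h => ⟨h.1.symm, h.2.symm⟩⟩
  loopless := ⟨fun v h => G.loopless.irrefl v h.1⟩

/-- `S` is a weakly connected dominating set. -/
def SimpleGraph.IsWeaklyConnectedDominatingSet (G : SimpleGraph V) (S : Finset V) : Prop :=
  S.Nonempty ∧ (G.weakSubgraph S).Connected

noncomputable def SimpleGraph.weaklyConnectedDominationNumber (G : SimpleGraph V) : ℕ :=
  sInf {k : ℕ | ∃ S : Finset V, G.IsWeaklyConnectedDominatingSet S ∧ S.card = k}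

/-- `S` is a connected dominating set. -/
def SimpleGraph.IsConnectedDominatingSet (G : SimpleGraph V) (S : Finset V) : Prop :=
  (∀ v ∉ S, ∃ u ∈ S, G.Adj u v) ∧ (G.induce (S : Set V)).Connected

noncomputable def SimpleGraph.connectedDominationNumber (G : SimpleGraph V) : ℕ :=
  sInf {k : ℕ | ∃ S : Finset V, G.IsConnectedDominatingSet S ∧ S.card = k}

/-- `S` is a restrained dominating set. -/
def SimpleGraph.IsRestrainedDominatingSet (G : SimpleGraph V) (S : Finset V) : Prop :=
  ∀ v ∉ S, (∃ u ∈ S, G.Adj u v) ∧ (∃ w ∉ S, G.Adj w v)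

noncomputable def SimpleGraph.restrainedDominationNumber (G : SimpleGraph V) : ℕ :=
  sInf {k : ℕ | ∃ S : Finset V, G.IsRestrainedDominatingSet S ∧ S.card = k}

/-- The restrained bondage number. -/
noncomputable def SimpleGraph.restrainedBondageNumber (G : SimpleGraph V) : ℕ :=
  sInf {k : ℕ | ∃ F : Finset (Sym2 V), ↑F ⊆ G.edgeSet ∧ F.card = k ∧
    G.restrainedDominationNumber < (G.deleteEdges ↑F).restrainedDominationNumber}

/-- `S` is a total restrained dominating set. -/
def SimpleGraph.IsTotalRestrainedDominatingSet (G : SimpleGraph V) (S : Finset V) : Prop :=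
  (∀ v : V, ∃ u ∈ S, G.Adj u v) ∧ ∀ v ∉ S, ∃ w ∉ S, G.Adj w v

noncomputable def SimpleGraph.totalRestrainedDominationNumber (G : SimpleGraph V) : ℕ :=
  sInf {k : ℕ | ∃ S : Finset V, G.IsTotalRestrainedDominatingSet S ∧ S.card = k}

/-- The total restrained bondage number (`⊤` if no suitable edge set exists). -/
noncomputable def SimpleGraph.totalRestrainedBondageNumber (G : SimpleGraph V) : ℕ∞ :=
  sInf {k : ℕ∞ | ∃ F : Finset (Sym2 V), ↑F ⊆ G.edgeSet ∧ (F.card : ℕ∞) = k ∧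
    (∀ v : V, ∃ u : V, (G.deleteEdges ↑F).Adj u v) ∧
    G.totalRestrainedDominationNumber < (G.deleteEdges ↑F).totalRestrainedDominationNumber}

/-- Roman dominating function. -/
def SimpleGraph.IsRomanDominatingFunction (G : SimpleGraph V) (f : V → ℕ) : Prop :=
  (∀ v : V, f v ≤ 2) ∧ ∀ v : V, f v = 0 → ∃ u : V, G.Adj u v ∧ f u = 2

noncomputable def SimpleGraph.romanDominationNumber (G : SimpleGraph V) : ℕ :=
  sInf {k : ℕ | ∃ f : V → ℕ, G.IsRomanDominatingFunction f ∧ ∑ v : V, f v = k}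

noncomputable def SimpleGraph.romanBondageNumber (G : SimpleGraph V) : ℕ :=
  sInf {k : ℕ | ∃ F : Finset (Sym2 V), ↑F ⊆ G.edgeSet ∧ F.card = k ∧
    G.romanDominationNumber < (G.deleteEdges ↑F).romanDominationNumber}

/-- The minimum edge-degree `ξ(G)`. -/
noncomputable def SimpleGraph.minEdgeDegree (G : SimpleGraph V) [DecidableRel G.Adj] : ℕ :=
  sInf {k : ℕ | ∃ d : G.Dart, G.degree d.toProd.1 + G.degree d.toProd.2 - 2 = k}

/-- A restricted edge-cut: removing it disconnects `G` leaving no isolated vertex. -/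
def SimpleGraph.IsRestrictedEdgeCut (G : SimpleGraph V) (F : Finset (Sym2 V)) : Prop :=
  ↑F ⊆ G.edgeSet ∧ ¬ (G.deleteEdges ↑F).Connected ∧
    ∀ v : V, ∃ u : V, (G.deleteEdges ↑F).Adj u v

/-- The restricted edge-connectivity `λ'(G)`. -/
noncomputable def SimpleGraph.restrictedEdgeConnectivity (G : SimpleGraph V) : ℕ :=
  sInf {k : ℕ | ∃ F : Finset (Sym2 V), G.IsRestrictedEdgeCut F ∧ F.card = k}

/-- `G` is a star: all edges share a common vertex. -/
def SimpleGraph.IsStar (G : SimpleGraph V) : Prop :=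
  ∃ c : V, ∀ e ∈ G.edgeSet, c ∈ e

/-- The average degree `2|E|/|V|` of `G`. -/
noncomputable def SimpleGraph.averageDegree (G : SimpleGraph V) [DecidableRel G.Adj] : ℝ :=
  2 * (G.edgeFinset.card : ℝ) / (Fintype.card V : ℝ)

def h1 (x : ℕ) : ℕ := if x ≤ 3 then 2 * x + 13 else 4 * x + 7
def h2 (x : ℕ) : ℕ := if x = 0 then 8 else 4 * x + 5
def k1 (x : ℕ) : ℕ := if x ≤ 2 then 2 * x + 11 else if x ≤ 5 then 2 * x + 9 else 2 * x + 7
def k2 (x : ℕ) : ℕ := if x = 1 then 8 else 2 * x + 5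

private lemma hr_pair {V : Type*} [Fintype V] [DecidableEq V] (G : SimpleGraph V) [DecidableRel G.Adj]
    [Nonempty V] (hδ : 4 ≤ G.minDegree) :
    ∃ u v : V, (G.Adj u v ∨ (u ≠ v ∧ ∃ m, G.Adj u m ∧ G.Adj m v)) ∧
      ((G.degree u : ℝ) + (G.degree v : ℝ)) ≤ 2 * G.averageDegree := by
  set a : ℝ := G.averageDegree with ha
  by_contra hcon
  push_neg at hcon
  have hdeg : ∀ v : V, 4 ≤ G.degree v := fun v => le_trans hδ (G.minDegree_le_degree v)
  have hn0 : (0:ℝ) < (Fintype.card V : ℝ) := by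
    exact_mod_cast Fintype.card_pos
  have hsum : ∑ v : V, (G.degree v : ℝ) = a * (Fintype.card V : ℝ) := by
    rw [ha, SimpleGraph.averageDegree]
    rw [div_mul_cancel₀ _ (ne_of_gt hn0)]
    have h2 := G.sum_degrees_eq_twice_card_edges
    push_cast
    exact_mod_cast congrArg (fun n : ℕ => (n:ℝ)) h2
  -- L: low-degree vertices
  set L : Finset V := univ.filter (fun v => (G.degree v : ℝ) ≤ a) with hL
  have hLne : L.Nonempty := by
    by_contra hemp
    rw [not_nonempty_iff_eq_empty] at hemp
    have : ∀ v ∈ (univ : Finset V), a < (G.degree v : ℝ) := by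
      intro v _
      by_contra h
      push_neg at h
      have : v ∈ L := by simp [hL, h]
      simp [hemp] at this
    have h1 : ∑ _v : V, a < ∑ v : V, (G.degree v : ℝ) :=
      Finset.sum_lt_sum_of_nonempty univ_nonempty this
    rw [hsum] at h1
    simp [Finset.sum_const, mul_comm] at h1
  have hmemL : ∀ v ∈ L, (G.degree v : ℝ) ≤ a := by
    intro v hv; rw [hL, mem_filter] at hv; exact hv.2
  -- pairwise disjoint neighborhoods
  have hdisj : ∀ u ∈ L, ∀ u' ∈ L, u ≠ u' →
      Disjoint (G.neighborFinset u) (G.neighborFinset u') := by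
    intro u hu u' hu' hne
    rw [Finset.disjoint_left]
    intro w hw hw'
    rw [mem_neighborFinset] at hw hw'
    have := hcon u u' (Or.inr ⟨hne, w, hw, hw'.symm⟩)
    have h1 := hmemL u hu
    have h2 := hmemL u' hu'
    linarith
  set NL : Finset V := L.biUnion (fun u => G.neighborFinset u) with hNL
  have hLNL : Disjoint L NL := by
    rw [Finset.disjoint_left]
    intro v hv hv'
    rw [hNL, mem_biUnion] at hv'
    obtain ⟨u, hu, hadj⟩ := hv'
    rw [mem_neighborFinset] at hadj
    have := hcon u v (Or.inl hadj)
    have h1 := hmemL u hu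
    have h2 := hmemL v hv
    linarith
  have hcardNL : (NL.card : ℝ) = ∑ u ∈ L, (G.degree u : ℝ) := by
    rw [hNL, Finset.card_biUnion hdisj]
    push_cast
    exact Finset.sum_congr rfl fun u _ => by rw [G.card_neighborFinset_eq_degree u]
  set rest : Finset V := univ \ (L ∪ NL) with hrest
  have hsplit : ∑ v : V, (G.degree v : ℝ)
      = ∑ v ∈ L, (G.degree v : ℝ) + ∑ v ∈ NL, (G.degree v : ℝ) + ∑ v ∈ rest, (G.degree v : ℝ) := by
    rw [hrest, ← Finset.sum_union hLNL]
    rw [← Finset.sum_sdiff (Finset.subset_univ (L ∪ NL))]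
    ring
  -- B1
  have hB1 : ∑ v ∈ NL, (G.degree v : ℝ) > ∑ u ∈ L, (G.degree u : ℝ) * (2 * a - (G.degree u : ℝ)) := by
    rw [hNL, Finset.sum_biUnion ((fun u hu u' hu' h => hdisj u hu u' hu' h) : (L : Set V).PairwiseDisjoint _)]
    apply Finset.sum_lt_sum_of_nonempty hLne
    intro u hu
    have hNune : (G.neighborFinset u).Nonempty := by
      rw [← Finset.card_pos, G.card_neighborFinset_eq_degree u]
      have := hdeg u; omega
    calc (G.degree u : ℝ) * (2 * a - (G.degree u : ℝ))
        = ∑ _w ∈ G.neighborFinset u, (2 * a - (G.degree u : ℝ)) := by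
          rw [Finset.sum_const, G.card_neighborFinset_eq_degree u, nsmul_eq_mul]
      _ < ∑ w ∈ G.neighborFinset u, (G.degree w : ℝ) := by
          apply Finset.sum_lt_sum_of_nonempty hNune
          intro w hw
          rw [mem_neighborFinset] at hw
          have := hcon u w (Or.inl hw)
          linarith
  -- B2
  have hB2 : ∑ v ∈ rest, (G.degree v : ℝ) ≥ a * (rest.card : ℝ) := by
    calc ∑ v ∈ rest, (G.degree v : ℝ) ≥ ∑ _v ∈ rest, a := by
          apply Finset.sum_le_sum
          intro v hv
          rw [hrest, Finset.mem_sdiff, Finset.mem_union] at hv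
          have hvL : v ∉ L := fun h => hv.2 (Or.inl h)
          rw [hL, mem_filter] at hvL
          push_neg at hvL
          exact le_of_lt (hvL (mem_univ v))
      _ = a * (rest.card : ℝ) := by rw [Finset.sum_const, nsmul_eq_mul]; ring
  have hrestcard : (rest.card : ℝ) = (Fintype.card V : ℝ) - (L.card : ℝ) - (NL.card : ℝ) := by
    have hle : L.card + NL.card ≤ Fintype.card V := by
      rw [← Finset.card_union_of_disjoint hLNL, ← Finset.card_univ (α := V)]
      exact Finset.card_le_univ _
    rw [hrest, Finset.card_sdiff_of_subset (Finset.subset_univ _), Finset.card_union_of_disjoint hLNL,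
      Finset.card_univ, Nat.cast_sub hle]
    push_cast
    ring
  -- combine
  have hfinal : (0:ℝ) > ∑ u ∈ L, ((G.degree u : ℝ) - 1) * (a - (G.degree u : ℝ)) := by
    have e1 : ∑ u ∈ L, ((G.degree u : ℝ) - 1) * (a - (G.degree u : ℝ))
        = ∑ u ∈ L, (G.degree u : ℝ) + ∑ u ∈ L, (G.degree u : ℝ) * (2*a - (G.degree u : ℝ))
          - a * (L.card : ℝ) - a * ∑ u ∈ L, (G.degree u : ℝ) := by
      have hc : a * (L.card : ℝ) = ∑ _u ∈ L, a := by
        rw [Finset.sum_const, nsmul_eq_mul]; ring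
      rw [hc, Finset.mul_sum, ← Finset.sum_add_distrib, ← Finset.sum_sub_distrib,
        ← Finset.sum_sub_distrib]
      exact Finset.sum_congr rfl (fun u _ => by ring)
    have hB2' : ∑ v ∈ rest, (G.degree v : ℝ)
        ≥ a * (Fintype.card V : ℝ) - a * (L.card : ℝ) - a * ∑ u ∈ L, (G.degree u : ℝ) := by
      calc ∑ v ∈ rest, (G.degree v : ℝ) ≥ a * (rest.card : ℝ) := hB2
        _ = a * (Fintype.card V : ℝ) - a * (L.card : ℝ) - a * ∑ u ∈ L, (G.degree u : ℝ) := by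
            rw [hrestcard, hcardNL]; ring
    rw [e1]
    linarith [hB1, hB2', hsplit, hsum]
  have : (0:ℝ) ≤ ∑ u ∈ L, ((G.degree u : ℝ) - 1) * (a - (G.degree u : ℝ)) := by
    apply Finset.sum_nonneg
    intro u hu
    have h1 := hmemL u hu
    have h2 := hdeg u
    have : (4:ℝ) ≤ (G.degree u : ℝ) := by exact_mod_cast h2
    nlinarith
  linarith

private lemma bondage_construction (G : SimpleGraph V) [DecidableRel G.Adj] [Nonempty V]
    (hδ : 4 ≤ G.minDegree) {x y z : V} (hxy : G.Adj x y) (hyz : G.Adj y z) (hxz : x ≠ z) :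
    ∃ F : Finset (Sym2 V), ↑F ⊆ G.edgeSet ∧
      F.card ≤ G.degree x + G.degree y + G.degree z - 4 ∧
      (∀ v : V, ∃ u : V, (G.deleteEdges ↑F).Adj u v) ∧
      G.totalRestrainedDominationNumber < (G.deleteEdges ↑F).totalRestrainedDominationNumber := by
  classical
  have hdeg : ∀ v : V, 4 ≤ G.degree v := fun v => le_trans hδ (G.minDegree_le_degree v)
  have hxney : x ≠ y := hxy.ne
  have hynez : y ≠ z := hyz.ne
  set F : Finset (Sym2 V) :=
    (G.edgeFinset.filter (fun e => x ∈ e ∨ y ∈ e ∨ z ∈ e)) \ {s(x,y), s(y,z)} with hF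
  set G' := G.deleteEdges ↑F with hG'
  have hFsub : ↑F ⊆ G.edgeSet := by
    intro e he
    simp only [hF, Finset.coe_sdiff, Set.mem_diff, Finset.coe_filter, Set.mem_setOf_eq,
      mem_edgeFinset] at he
    exact he.1.1
  -- adjacency characterization
  have hadj' : ∀ u v : V, G'.Adj u v ↔ G.Adj u v ∧
      (s(u,v) = s(x,y) ∨ s(u,v) = s(y,z) ∨
        (u ≠ x ∧ u ≠ y ∧ u ≠ z ∧ v ≠ x ∧ v ≠ y ∧ v ≠ z)) := by
    intro u v
    rw [hG', SimpleGraph.deleteEdges_adj]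
    constructor
    · rintro ⟨hadj, hne⟩
      refine ⟨hadj, ?_⟩
      simp only [hF, Finset.coe_sdiff, Set.mem_diff, Finset.coe_filter, Set.mem_setOf_eq,
        mem_edgeFinset, not_and, not_not] at hne
      by_cases h1 : s(u,v) = s(x,y)
      · exact Or.inl h1
      by_cases h2 : s(u,v) = s(y,z)
      · exact Or.inr (Or.inl h2)
      · refine Or.inr (Or.inr ?_)
        have := hne
        by_cases htouch : x ∈ s(u,v) ∨ y ∈ s(u,v) ∨ z ∈ s(u,v)
        · exfalso
          have h3 := hne ⟨(SimpleGraph.mem_edgeSet G).mpr hadj, htouch⟩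
          simp only [Finset.coe_insert, Finset.coe_singleton, Set.mem_insert_iff,
            Set.mem_singleton_iff] at h3
          tauto
        · push_neg at htouch
          simp only [Sym2.mem_iff, not_or] at htouch
          push_neg at htouch
          obtain ⟨⟨h4,h5⟩,⟨h6,h7⟩,h8,h9⟩ := htouch
          exact ⟨fun h => h4 h.symm, fun h => h6 h.symm, fun h => h8 h.symm,
            fun h => h5 h.symm, fun h => h7 h.symm, fun h => h9 h.symm⟩
    · rintro ⟨hadj, hcase⟩
      refine ⟨hadj, ?_⟩
      simp only [hF, Finset.coe_sdiff, Set.mem_diff, Finset.coe_filter, Set.mem_setOf_eq,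
        mem_edgeFinset, Finset.coe_insert, Finset.coe_singleton, Set.mem_insert_iff,
        Set.mem_singleton_iff]
      rintro ⟨⟨_, htouch⟩, hnot⟩
      rcases hcase with h | h | h
      · exact hnot (Or.inl h)
      · exact hnot (Or.inr h)
      · obtain ⟨h1,h2,h3,h4,h5,h6⟩ := h
        simp only [Sym2.mem_iff] at htouch
        rcases htouch with (h|h)|(h|h)|(h|h) <;> simp_all

  have hadjmono : ∀ u v : V, G'.Adj u v → G.Adj u v := fun u v h => ((hadj' u v).mp h).1
  have hx' : ∀ v : V, G'.Adj x v ↔ v = y := by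
    intro v
    rw [hadj']
    constructor
    · rintro ⟨hadj, h | h | h⟩
      · rw [Sym2.eq_iff] at h
        rcases h with ⟨_, h⟩ | ⟨h1, h2⟩
        · exact h
        · exact absurd h1 hxney
      · rw [Sym2.eq_iff] at h
        rcases h with ⟨h1, _⟩ | ⟨h1, h2⟩
        · exact absurd h1 hxney
        · exact absurd h1 hxz
      · exact absurd rfl h.1
    · rintro rfl
      exact ⟨hxy, Or.inl rfl⟩
  have hz' : ∀ v : V, G'.Adj z v ↔ v = y := by
    intro v
    rw [hadj']
    constructor
    · rintro ⟨hadj, h | h | h⟩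
      · rw [Sym2.eq_iff] at h
        rcases h with ⟨h1, _⟩ | ⟨h1, h2⟩
        · exact absurd h1.symm hxz
        · exact absurd h1.symm hynez
      · rw [Sym2.eq_iff] at h
        rcases h with ⟨h1, _⟩ | ⟨_, h2⟩
        · exact absurd h1.symm hynez
        · exact h2
      · exact absurd rfl h.2.2.1
    · rintro rfl
      refine ⟨hyz.symm, Or.inr (Or.inl ?_)⟩
      rw [Sym2.eq_iff]
      exact Or.inr ⟨rfl, rfl⟩
  have hy' : ∀ v : V, G'.Adj y v ↔ (v = x ∨ v = z) := by
    intro v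
    rw [hadj']
    constructor
    · rintro ⟨hadj, h | h | h⟩
      · rw [Sym2.eq_iff] at h
        rcases h with ⟨h1, _⟩ | ⟨_, h2⟩
        · exact absurd h1.symm hxney
        · exact Or.inl h2
      · rw [Sym2.eq_iff] at h
        rcases h with ⟨_, h2⟩ | ⟨h1, _⟩
        · exact Or.inr h2
        · exact absurd h1 hynez
      · exact absurd rfl h.2.1
    · rintro (rfl | rfl)
      · refine ⟨hxy.symm, Or.inl ?_⟩
        rw [Sym2.eq_iff]
        exact Or.inr ⟨rfl, rfl⟩
      · exact ⟨hyz, Or.inr (Or.inl rfl)⟩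
  have houter : ∀ u v : V, u ≠ x → u ≠ y → u ≠ z → v ≠ x → v ≠ y → v ≠ z →
      (G'.Adj u v ↔ G.Adj u v) := by
    intro u v h1 h2 h3 h4 h5 h6
    rw [hadj']
    constructor
    · exact fun h => h.1
    · exact fun h => ⟨h, Or.inr (Or.inr ⟨h1,h2,h3,h4,h5,h6⟩)⟩
  have hforce : ∀ u v : V, G'.Adj u v → v ≠ x → v ≠ y → v ≠ z →
      (u ≠ x ∧ u ≠ y ∧ u ≠ z ∧ G.Adj u v) := by
    intro u v h hv1 hv2 hv3
    refine ⟨?_, ?_, ?_, hadjmono u v h⟩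
    · rintro rfl; exact hv2 ((hx' v).mp h)
    · rintro rfl
      rcases (hy' v).mp h with h' | h'
      · exact hv1 h'
      · exact hv3 h'
    · rintro rfl; exact hv2 ((hz' v).mp h)
  have hnear : ∀ p : V, ∃ w : V, w ≠ x ∧ w ≠ y ∧ w ≠ z ∧ G.Adj p w := by
    intro p
    have h1 : ({x,y,z} : Finset V).card ≤ 3 := by
      apply le_trans (Finset.card_insert_le _ _)
      have := Finset.card_insert_le z ({} : Finset V)
      have h2 := Finset.card_insert_le y ({z} : Finset V)
      simp at h2 ⊢
      omega
    have h2 : 4 ≤ (G.neighborFinset p).card := by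
      rw [G.card_neighborFinset_eq_degree]; exact hdeg p
    have h3 : 0 < (G.neighborFinset p \ ({x,y,z} : Finset V)).card := by
      have h4 := Finset.le_card_sdiff ({x,y,z} : Finset V) (G.neighborFinset p)
      omega
    obtain ⟨w, hw⟩ := Finset.card_pos.mp h3
    rw [Finset.mem_sdiff, mem_neighborFinset] at hw
    simp only [Finset.mem_insert, Finset.mem_singleton, not_or] at hw
    exact ⟨w, hw.2.1, hw.2.2.1, hw.2.2.2, hw.1⟩
  have hniso : ∀ v : V, ∃ u : V, G'.Adj u v := by
    intro v
    by_cases hvx : v = x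
    · exact ⟨y, by rw [hvx]; exact (hy' x).mpr (Or.inl rfl)⟩
    by_cases hvy : v = y
    · exact ⟨x, by rw [hvy]; exact (hx' y).mpr rfl⟩
    by_cases hvz : v = z
    · exact ⟨y, by rw [hvz]; exact (hy' z).mpr (Or.inr rfl)⟩
    · obtain ⟨w, hw1, hw2, hw3, hw4⟩ := hnear v
      exact ⟨w, (houter w v hw1 hw2 hw3 hvx hvy hvz).mpr hw4.symm⟩

  have hcardF : F.card ≤ G.degree x + G.degree y + G.degree z - 4 := by
    have hsub : F ⊆ (G.incidenceFinset x \ {s(x,y)}) ∪ ((G.incidenceFinset y \ {s(x,y), s(y,z)})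
        ∪ (G.incidenceFinset z \ {s(y,z)})) := by
      intro e he
      simp only [hF, Finset.mem_sdiff, Finset.mem_filter, mem_edgeFinset, Finset.mem_insert,
        Finset.mem_singleton, not_or] at he
      obtain ⟨⟨hedge, htouch⟩, hne1, hne2⟩ := he
      simp only [Finset.mem_union, Finset.mem_sdiff, SimpleGraph.mem_incidenceFinset,
        Finset.mem_insert, Finset.mem_singleton, not_or]
      rcases htouch with h | h | h
      · exact Or.inl ⟨⟨hedge, h⟩, hne1⟩
      · exact Or.inr (Or.inl ⟨⟨hedge, h⟩, hne1, hne2⟩)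
      · exact Or.inr (Or.inr ⟨⟨hedge, h⟩, hne2⟩)
    have hxy_mem : s(x,y) ∈ G.incidenceFinset x := by
      rw [SimpleGraph.mem_incidenceFinset]
      exact G.mk'_mem_incidenceSet_left_iff.mpr hxy
    have hxy_memy : s(x,y) ∈ G.incidenceFinset y := by
      rw [SimpleGraph.mem_incidenceFinset]
      exact G.mk'_mem_incidenceSet_right_iff.mpr hxy
    have hyz_memy : s(y,z) ∈ G.incidenceFinset y := by
      rw [SimpleGraph.mem_incidenceFinset]
      exact G.mk'_mem_incidenceSet_left_iff.mpr hyz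
    have hyz_memz : s(y,z) ∈ G.incidenceFinset z := by
      rw [SimpleGraph.mem_incidenceFinset]
      exact G.mk'_mem_incidenceSet_right_iff.mpr hyz
    have hnexyyz : s(x,y) ≠ s(y,z) := by
      intro h
      rw [Sym2.eq_iff] at h
      rcases h with ⟨h1, h2⟩ | ⟨h1, h2⟩
      · exact hxney h1
      · exact hxz h1
    have hc1 : (G.incidenceFinset x \ {s(x,y)}).card = G.degree x - 1 := by
      rw [Finset.card_sdiff_of_subset (by simpa using hxy_mem), G.card_incidenceFinset_eq_degree,
        Finset.card_singleton]
    have hc2 : (G.incidenceFinset y \ ({s(x,y), s(y,z)} : Finset (Sym2 V))).card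
        = G.degree y - 2 := by
      rw [Finset.card_sdiff_of_subset, G.card_incidenceFinset_eq_degree]
      · congr 1
        rw [Finset.card_insert_of_notMem (by simpa using hnexyyz), Finset.card_singleton]
      · intro e he
        simp only [Finset.mem_insert, Finset.mem_singleton] at he
        rcases he with rfl | rfl
        · exact hxy_memy
        · exact hyz_memy
    have hc3 : (G.incidenceFinset z \ {s(y,z)}).card = G.degree z - 1 := by
      rw [Finset.card_sdiff_of_subset (by simpa using hyz_memz), G.card_incidenceFinset_eq_degree,
        Finset.card_singleton]
    have h1 := Finset.card_le_card hsub
    have h2 := Finset.card_union_le (G.incidenceFinset x \ {s(x,y)})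
      ((G.incidenceFinset y \ ({s(x,y), s(y,z)} : Finset (Sym2 V)))
        ∪ (G.incidenceFinset z \ {s(y,z)}))
    have h3 := Finset.card_union_le (G.incidenceFinset y \ ({s(x,y), s(y,z)} : Finset (Sym2 V)))
      (G.incidenceFinset z \ {s(y,z)})
    have hdx := hdeg x
    have hdy := hdeg y
    have hdz := hdeg z
    omega

  refine ⟨F, hFsub, hcardF, hniso, ?_⟩
  have huniv : G'.IsTotalRestrainedDominatingSet Finset.univ := by
    constructor
    · intro v
      obtain ⟨u, hu⟩ := hniso v
      exact ⟨u, Finset.mem_univ u, hu⟩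
    · intro v hv
      exact absurd (Finset.mem_univ v) hv
  have hsetne : {k : ℕ | ∃ S : Finset V,
      G'.IsTotalRestrainedDominatingSet S ∧ S.card = k}.Nonempty :=
    ⟨_, Finset.univ, huniv, rfl⟩
  obtain ⟨S', hS', hcardS'⟩ := Nat.sInf_mem hsetne
  have hyS' : y ∈ S' := by
    obtain ⟨u, huS, hu⟩ := hS'.1 x
    have h : u = y := (hx' u).mp hu.symm
    rwa [← h]
  have hxS' : x ∈ S' := by
    by_contra hxS
    obtain ⟨w, hwS, hw⟩ := hS'.2 x hxS
    exact hwS (by rw [(hx' w).mp hw.symm]; exact hyS')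
  have hzS' : z ∈ S' := by
    by_contra hzS
    obtain ⟨w, hwS, hw⟩ := hS'.2 z hzS
    exact hwS (by rw [(hz' w).mp hw.symm]; exact hyS')
  set T : Finset V := S' \ {x,y,z} with hT
  have hTsub : T ⊆ S' := Finset.sdiff_subset
  have hTmem : ∀ u ∈ T, u ≠ x ∧ u ≠ y ∧ u ≠ z ∧ u ∈ S' := by
    intro u hu
    rw [hT, Finset.mem_sdiff] at hu
    simp only [Finset.mem_insert, Finset.mem_singleton, not_or] at hu
    exact ⟨hu.2.1, hu.2.2.1, hu.2.2.2, hu.1⟩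
  have hxnT : x ∉ T := fun h => (hTmem x h).1 rfl
  have hynT : y ∉ T := fun h => (hTmem y h).2.1 rfl
  have hznT : z ∉ T := fun h => (hTmem z h).2.2.1 rfl
  have hmemT : ∀ u, u ∈ S' → u ≠ x → u ≠ y → u ≠ z → u ∈ T := by
    intro u h h1 h2 h3
    rw [hT, Finset.mem_sdiff]
    simp only [Finset.mem_insert, Finset.mem_singleton, not_or]
    exact ⟨h, h1, h2, h3⟩
  have hsub3 : ({x,y,z} : Finset V) ⊆ S' := by
    intro w hw
    simp only [Finset.mem_insert, Finset.mem_singleton] at hw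
    rcases hw with rfl | rfl | rfl
    · exact hxS'
    · exact hyS'
    · exact hzS'
  have hcard3 : ({x,y,z} : Finset V).card = 3 := by
    rw [Finset.card_insert_of_notMem (by simp [hxney, hxz]),
      Finset.card_insert_of_notMem (by simp [hynez]), Finset.card_singleton]
  have hTcard : T.card = S'.card - 3 := by
    rw [hT, Finset.card_sdiff_of_subset hsub3, hcard3]
  have hS'3 : 3 ≤ S'.card := by
    calc 3 = ({x,y,z} : Finset V).card := hcard3.symm
      _ ≤ S'.card := Finset.card_le_card hsub3
  have hP1 : ∀ v : V, v ≠ x → v ≠ y → v ≠ z → ∃ u ∈ T, G.Adj u v := by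
    intro v h1 h2 h3
    obtain ⟨u, huS, hu⟩ := hS'.1 v
    obtain ⟨hu1, hu2, hu3, hadj⟩ := hforce u v hu h1 h2 h3
    exact ⟨u, hmemT u huS hu1 hu2 hu3, hadj⟩
  have hP2 : ∀ v : V, v ∉ S' → ∃ w, w ∉ S' ∧ w ≠ x ∧ w ≠ y ∧ w ≠ z ∧ G.Adj w v := by
    intro v hv
    obtain ⟨w, hwS, hw⟩ := hS'.2 v hv
    refine ⟨w, hwS, ?_, ?_, ?_, hadjmono w v hw⟩
    · rintro rfl; exact hwS hxS'
    · rintro rfl; exact hwS hyS'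
    · rintro rfl; exact hwS hzS'
  have hS'notT : ∀ v, v ∉ T → v ≠ x → v ≠ y → v ≠ z → v ∉ S' :=
    fun v hv h1 h2 h3 hS => hv (hmemT v hS h1 h2 h3)
  have hTnbr : ∀ p : V, (¬∃ r, r ∉ S' ∧ G.Adj p r) → ∃ u ∈ T, G.Adj u p := by
    intro p hp
    push_neg at hp
    obtain ⟨w, h1, h2, h3, hadj⟩ := hnear p
    have hwS : w ∈ S' := by
      by_contra hw
      exact hp w hw hadj
    exact ⟨w, hmemT w hwS h1 h2 h3, hadj.symm⟩
  have key : ∃ S : Finset V, G.IsTotalRestrainedDominatingSet S ∧ S.card < S'.card := by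
    by_cases hxR : ∃ r, r ∉ S' ∧ G.Adj x r
    · obtain ⟨r, hrS, hr⟩ := hxR
      refine ⟨insert y (insert z T), ⟨?_, ?_⟩, ?_⟩
      · intro v
        by_cases h1 : v = x
        · exact ⟨y, Finset.mem_insert_self y _, by rw [h1]; exact hxy.symm⟩
        by_cases h2 : v = y
        · exact ⟨z, Finset.mem_insert_of_mem (Finset.mem_insert_self z T),
            by rw [h2]; exact hyz.symm⟩
        by_cases h3 : v = z
        · exact ⟨y, Finset.mem_insert_self y _, by rw [h3]; exact hyz⟩
        · obtain ⟨u, huT, hu⟩ := hP1 v h1 h2 h3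
          exact ⟨u, Finset.mem_insert_of_mem (Finset.mem_insert_of_mem huT), hu⟩
      · intro v hv
        simp only [Finset.mem_insert, not_or] at hv
        obtain ⟨hv1, hv2, hv3⟩ := hv
        by_cases h1 : v = x
        · refine ⟨r, ?_, by rw [h1]; exact hr.symm⟩
          simp only [Finset.mem_insert, not_or]
          refine ⟨?_, ?_, fun h => hrS (hTsub h)⟩
          · rintro rfl; exact hrS hyS'
          · rintro rfl; exact hrS hzS'
        · have hvS : v ∉ S' := hS'notT v hv3 h1 hv1 hv2
          obtain ⟨w, hwS, hw1, hw2, hw3, hadj⟩ := hP2 v hvS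
          refine ⟨w, ?_, hadj⟩
          simp only [Finset.mem_insert, not_or]
          exact ⟨hw2, hw3, fun h => hwS (hTsub h)⟩
      · have hi1 := Finset.card_insert_le y (insert z T)
        have hi2 := Finset.card_insert_le z T
        omega
    · by_cases hzR : ∃ r, r ∉ S' ∧ G.Adj z r
      · obtain ⟨r, hrS, hr⟩ := hzR
        refine ⟨insert x (insert y T), ⟨?_, ?_⟩, ?_⟩
        · intro v
          by_cases h1 : v = x
          · exact ⟨y, Finset.mem_insert_of_mem (Finset.mem_insert_self y T),
              by rw [h1]; exact hxy.symm⟩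
          by_cases h2 : v = y
          · exact ⟨x, Finset.mem_insert_self x _, by rw [h2]; exact hxy⟩
          by_cases h3 : v = z
          · exact ⟨y, Finset.mem_insert_of_mem (Finset.mem_insert_self y T),
              by rw [h3]; exact hyz⟩
          · obtain ⟨u, huT, hu⟩ := hP1 v h1 h2 h3
            exact ⟨u, Finset.mem_insert_of_mem (Finset.mem_insert_of_mem huT), hu⟩
        · intro v hv
          simp only [Finset.mem_insert, not_or] at hv
          obtain ⟨hv1, hv2, hv3⟩ := hv
          by_cases h3 : v = z
          · refine ⟨r, ?_, by rw [h3]; exact hr.symm⟩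
            simp only [Finset.mem_insert, not_or]
            refine ⟨?_, ?_, fun h => hrS (hTsub h)⟩
            · rintro rfl; exact hrS hxS'
            · rintro rfl; exact hrS hyS'
          · have hvS : v ∉ S' := hS'notT v hv3 hv1 hv2 h3
            obtain ⟨w, hwS, hw1, hw2, hw3, hadj⟩ := hP2 v hvS
            refine ⟨w, ?_, hadj⟩
            simp only [Finset.mem_insert, not_or]
            exact ⟨hw1, hw2, fun h => hwS (hTsub h)⟩
        · have hi1 := Finset.card_insert_le x (insert y T)
          have hi2 := Finset.card_insert_le y T
          omega
      · by_cases hyR : ∃ r, r ∉ S' ∧ G.Adj y r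
        · obtain ⟨r, hrS, hr⟩ := hyR
          refine ⟨insert x (insert z T), ⟨?_, ?_⟩, ?_⟩
          · intro v
            by_cases h1 : v = x
            · obtain ⟨u, huT, hu⟩ := hTnbr x hxR
              exact ⟨u, Finset.mem_insert_of_mem (Finset.mem_insert_of_mem huT),
                by rw [h1]; exact hu⟩
            by_cases h2 : v = y
            · exact ⟨x, Finset.mem_insert_self x _, by rw [h2]; exact hxy⟩
            by_cases h3 : v = z
            · obtain ⟨u, huT, hu⟩ := hTnbr z hzR
              exact ⟨u, Finset.mem_insert_of_mem (Finset.mem_insert_of_mem huT),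
                by rw [h3]; exact hu⟩
            · obtain ⟨u, huT, hu⟩ := hP1 v h1 h2 h3
              exact ⟨u, Finset.mem_insert_of_mem (Finset.mem_insert_of_mem huT), hu⟩
          · intro v hv
            simp only [Finset.mem_insert, not_or] at hv
            obtain ⟨hv1, hv3, hvT⟩ := hv
            by_cases h2 : v = y
            · refine ⟨r, ?_, by rw [h2]; exact hr.symm⟩
              simp only [Finset.mem_insert, not_or]
              refine ⟨?_, ?_, fun h => hrS (hTsub h)⟩
              · rintro rfl; exact hrS hxS'
              · rintro rfl; exact hrS hzS'
            · have hvS : v ∉ S' := hS'notT v hvT hv1 h2 hv3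
              obtain ⟨w, hwS, hw1, hw2, hw3, hadj⟩ := hP2 v hvS
              refine ⟨w, ?_, hadj⟩
              simp only [Finset.mem_insert, not_or]
              exact ⟨hw1, hw3, fun h => hwS (hTsub h)⟩
          · have hi1 := Finset.card_insert_le x (insert z T)
            have hi2 := Finset.card_insert_le z T
            omega
        · refine ⟨T, ⟨?_, ?_⟩, ?_⟩
          · intro v
            by_cases h1 : v = x
            · obtain ⟨u, huT, hu⟩ := hTnbr x hxR
              exact ⟨u, huT, by rw [h1]; exact hu⟩
            by_cases h2 : v = y
            · obtain ⟨u, huT, hu⟩ := hTnbr y hyR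
              exact ⟨u, huT, by rw [h2]; exact hu⟩
            by_cases h3 : v = z
            · obtain ⟨u, huT, hu⟩ := hTnbr z hzR
              exact ⟨u, huT, by rw [h3]; exact hu⟩
            · exact hP1 v h1 h2 h3
          · intro v hv
            by_cases h1 : v = x
            · exact ⟨y, hynT, by rw [h1]; exact hxy.symm⟩
            by_cases h2 : v = y
            · exact ⟨x, hxnT, by rw [h2]; exact hxy⟩
            by_cases h3 : v = z
            · exact ⟨y, hynT, by rw [h3]; exact hyz⟩
            · have hvS : v ∉ S' := hS'notT v hv h1 h2 h3
              obtain ⟨w, hwS, hw1, hw2, hw3, hadj⟩ := hP2 v hvS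
              exact ⟨w, fun h => hwS (hTsub h), hadj⟩
          · omega
  obtain ⟨S, hS, hlt⟩ := key
  have h1 : G.totalRestrainedDominationNumber ≤ S.card :=
    Nat.sInf_le ⟨S, hS, rfl⟩
  have h2 : S'.card = (G.deleteEdges ↑F).totalRestrainedDominationNumber := hcardS'
  omega

/-- `b_tr(G) ≤ 2 ad(G) + Δ(G) - 4` for connected graphs with `δ ≥ 4`. -/
theorem statement_13 {V : Type*} [Fintype V] [DecidableEq V] (G : SimpleGraph V)
    [DecidableRel G.Adj] (hconn : G.Connected) (hδ : 4 ≤ G.minDegree)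
    (hcard : 5 ≤ Fintype.card V) :
    ∃ b : ℕ, G.totalRestrainedBondageNumber = (b : ℕ∞) ∧
      (b : ℝ) ≤ 2 * G.averageDegree + (G.maxDegree : ℝ) - 4 := by
  have hne : Nonempty V := Fintype.card_pos_iff.mp (by omega)
  have hdeg : ∀ v : V, 4 ≤ G.degree v := fun v => le_trans hδ (G.minDegree_le_degree v)
  obtain ⟨u, v, hrel, hsum⟩ := hr_pair G hδ
  obtain ⟨x, y, z, hxy, hyz, hxz, hbound⟩ :
      ∃ x y z : V, G.Adj x y ∧ G.Adj y z ∧ x ≠ z ∧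
        ((G.degree x : ℝ) + (G.degree y : ℝ) + (G.degree z : ℝ))
          ≤ 2 * G.averageDegree + (G.maxDegree : ℝ) := by
    rcases hrel with hadj | ⟨hneq, m, h1, h2⟩
    · have h4 : 4 ≤ (G.neighborFinset v).card := by
        rw [G.card_neighborFinset_eq_degree]; exact hdeg v
      have h5 : 0 < (G.neighborFinset v \ {u}).card := by
        have := Finset.le_card_sdiff ({u} : Finset V) (G.neighborFinset v)
        simp only [Finset.card_singleton] at this
        omega
      obtain ⟨w, hw⟩ := Finset.card_pos.mp h5
      rw [Finset.mem_sdiff, mem_neighborFinset, Finset.mem_singleton] at hw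
      refine ⟨u, v, w, hadj, hw.1, fun h => hw.2 h.symm, ?_⟩
      have := G.degree_le_maxDegree w
      have : (G.degree w : ℝ) ≤ (G.maxDegree : ℝ) := by exact_mod_cast this
      linarith
    · refine ⟨u, m, v, h1, h2, hneq, ?_⟩
      have := G.degree_le_maxDegree m
      have : (G.degree m : ℝ) ≤ (G.maxDegree : ℝ) := by exact_mod_cast this
      linarith
  obtain ⟨F, hFsub, hFcard, hFniso, hFlt⟩ := bondage_construction G hδ hxy hyz hxz
  have hmem : (F.card : ℕ∞) ∈ {k : ℕ∞ | ∃ F : Finset (Sym2 V), ↑F ⊆ G.edgeSet ∧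
      (F.card : ℕ∞) = k ∧ (∀ v : V, ∃ u : V, (G.deleteEdges ↑F).Adj u v) ∧
      G.totalRestrainedDominationNumber
        < (G.deleteEdges ↑F).totalRestrainedDominationNumber} :=
    ⟨F, hFsub, rfl, hFniso, hFlt⟩
  have hle : G.totalRestrainedBondageNumber ≤ (F.card : ℕ∞) := sInf_le hmem
  have hne_top : G.totalRestrainedBondageNumber ≠ ⊤ := by
    intro h
    rw [h, top_le_iff] at hle
    exact (ENat.coe_ne_top F.card) hle
  lift G.totalRestrainedBondageNumber to ℕ using hne_top with b hb
  refine ⟨b, rfl, ?_⟩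
  have hble : b ≤ F.card := by exact_mod_cast hle
  have h4 : 4 ≤ G.degree x + G.degree y + G.degree z := by
    have := hdeg x; omega
  have hcast : (F.card : ℝ) ≤ (G.degree x : ℝ) + (G.degree y : ℝ) + (G.degree z : ℝ) - 4 := by
    have h5 : (F.card : ℝ) ≤ ((G.degree x + G.degree y + G.degree z - 4 : ℕ) : ℝ) := by
      exact_mod_cast hFcard
    rw [Nat.cast_sub h4] at h5
    push_cast at h5
    linarith

  have hbr : (b : ℝ) ≤ (F.card : ℝ) := by exact_mod_cast hble
  push_cast at hcast
  linarith
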